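/- Let n ≥ 2 and let D_avg = (∑_{v ∈ ZMod 2n} deg(v)) / (2n) be the average degree of the power graph P(C_{2n}) of the cyclic group ZMod 2n. Then the spectral radius of the power graph of the dicyclic group of order 4n satisfies λ₁(P(Q_{4n})) ≥ ((D_avg + 1) + √((D_avg − 1)² + 16)) / 2. -/

import Mathlib

open scoped Classical
open Matrix QuaternionGroup

noncomputable section

/-- The power graph of a (multiplicative) group: distinct `x, y` are adjacent iff one is
a natural-number power of the other. -/
def powerGraph (G : Type*) [Group G] : SimpleGraph G where
  Adj x y := x ≠ y ∧ ∃ m : ℕ, x = y ^ m ∨ y = x ^ m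
  symm := by
    constructor
    rintro x y ⟨hxy, m, hm⟩
    exact ⟨hxy.symm, m, hm.symm⟩
  loopless := by
    constructor
    rintro x ⟨hx, -⟩
    exact hx rfl

/-- The power graph of an additive group: distinct `x, y` are adjacent iff one is a
natural-number multiple (additive power) of the other. -/
def addPowerGraph (G : Type*) [AddGroup G] : SimpleGraph G where
  Adj x y := x ≠ y ∧ ∃ m : ℕ, x = m • y ∨ y = m • x
  symm := by
    constructor
    rintro x y ⟨hxy, m, hm⟩
    exact ⟨hxy.symm, m, hm.symm⟩
  loopless := by
    constructor
    rintro x ⟨hx, -⟩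
    exact hx rfl

variable {n : ℕ}

lemma qa_pow (i : ZMod (2*n)) (m : ℕ) : (a i : QuaternionGroup n) ^ m = a (m • i) := by
  induction m with
  | zero => rw [pow_zero, zero_nsmul, one_def]
  | succ k ih => rw [pow_succ, ih, a_mul_a, succ_nsmul]

lemma smul_n_cases (k : ℕ) : k • (n : ZMod (2*n)) = 0 ∨ k • (n : ZMod (2*n)) = n := by
  have h2n : (2:ℕ) • (n : ZMod (2*n)) = 0 := by
    rw [two_nsmul, ← Nat.cast_add, ← two_mul, ZMod.natCast_self]
  have hmod : k • (n : ZMod (2*n)) = (k % 2) • (n : ZMod (2*n)) := by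
    conv_lhs => rw [← Nat.div_add_mod k 2]
    rw [add_nsmul, mul_nsmul, h2n, smul_zero, zero_add]
  rcases Nat.mod_two_eq_zero_or_one k with h | h <;> rw [hmod, h]
  · left; simp
  · right; simp

lemma qxa_pow (j : ZMod (2*n)) (m : ℕ) :
    (xa j : QuaternionGroup n) ^ m = a ((m/2) • (n : ZMod (2*n))) ∨
    (xa j : QuaternionGroup n) ^ m = xa (j - (m/2) • (n : ZMod (2*n))) := by
  have heven : (xa j : QuaternionGroup n) ^ (2 * (m/2)) = a ((m/2) • (n : ZMod (2*n))) := by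
    rw [pow_mul, xa_sq, qa_pow]
  rcases Nat.mod_two_eq_zero_or_one m with h | h
  · left
    conv_lhs => rw [← Nat.div_add_mod m 2, h, add_zero]
    exact heven
  · right
    conv_lhs => rw [← Nat.div_add_mod m 2, h]
    rw [pow_succ, heven, a_mul_xa]

lemma n_ne_zero' [NeZero n] : (n : ZMod (2*n)) ≠ 0 := by
  rw [Ne, ZMod.natCast_eq_zero_iff]
  intro h
  have h1 := Nat.le_of_dvd (NeZero.pos n) h
  have h2 := NeZero.pos n
  omega

lemma neg_n_eq [NeZero n] : -(n : ZMod (2*n)) = n := by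
  have : (n : ZMod (2*n)) + n = 0 := by
    rw [← Nat.cast_add, ← two_mul, ZMod.natCast_self]
  linear_combination -this

lemma adj_a_a [NeZero n] (i j : ZMod (2*n)) :
    (powerGraph (QuaternionGroup n)).Adj (a i) (a j) ↔
      (addPowerGraph (ZMod (2*n))).Adj i j := by
  constructor
  · rintro ⟨hne, m, h | h⟩ <;> rw [qa_pow] at h
    · exact ⟨fun he => hne (by rw [he]), m, Or.inl (by injection h)⟩
    · exact ⟨fun he => hne (by rw [he]), m, Or.inr (by injection h)⟩
  · rintro ⟨hne, m, h | h⟩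
    · exact ⟨fun he => hne (by injection he), m, Or.inl (by rw [qa_pow, h])⟩
    · exact ⟨fun he => hne (by injection he), m, Or.inr (by rw [qa_pow, h])⟩

lemma adj_a_xa [NeZero n] (i j : ZMod (2*n)) :
    (powerGraph (QuaternionGroup n)).Adj (a i) (xa j) ↔ (i = 0 ∨ i = (n : ZMod (2*n))) := by
  constructor
  · rintro ⟨hne, m, h | h⟩
    · rcases qxa_pow j m with he | he <;> rw [he] at h
      · have : i = (m/2) • (n : ZMod (2*n)) := by injection h
        rcases smul_n_cases (n := n) (m/2) with h0 | h0
        · left; rw [this, h0]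
        · right; rw [this, h0]
      · exact absurd h (by simp)
    · rw [qa_pow] at h; exact absurd h (by simp)
  · rintro (rfl | rfl)
    · exact ⟨(by intro h; cases h), 0, Or.inl (by rw [pow_zero, one_def])⟩
    · exact ⟨by simp, 2, Or.inl (xa_sq j).symm⟩

lemma adj_xa_xa [NeZero n] (i j : ZMod (2*n)) :
    (powerGraph (QuaternionGroup n)).Adj (xa i) (xa j) ↔ j = i + n := by
  constructor
  · rintro ⟨hne, m, h | h⟩
    · rcases qxa_pow j m with he | he <;> rw [he] at h
      · exact absurd h (by simp)
      · have hi : i = j - (m/2) • (n : ZMod (2*n)) := by injection h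
        rcases smul_n_cases (n := n) (m/2) with h0 | h0
        · exact absurd (by rw [hi, h0, sub_zero]) hne
        · rw [hi, h0, sub_eq_add_neg, neg_n_eq, add_assoc, ← Nat.cast_add, ← two_mul,
            ZMod.natCast_self, add_zero]
    · rcases qxa_pow i m with he | he <;> rw [he] at h
      · exact absurd h (by simp)
      · have hj : j = i - (m/2) • (n : ZMod (2*n)) := by injection h
        rcases smul_n_cases (n := n) (m/2) with h0 | h0
        · exact absurd (by rw [hj, h0, sub_zero]) (Ne.symm hne)
        · rw [hj, h0, sub_eq_add_neg, neg_n_eq]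
  · rintro rfl
    refine ⟨by simp [n_ne_zero' (n := n)], 3, Or.inr ?_⟩
    have : (xa i : QuaternionGroup n) ^ 3 = a n * xa i := by
      rw [pow_succ, xa_sq]
    rw [this, a_mul_xa, sub_eq_add_neg, neg_n_eq]

def qeq (n : ℕ) : ZMod (2*n) ⊕ ZMod (2*n) ≃ QuaternionGroup n where
  toFun := Sum.elim a xa
  invFun g := match g with
    | .a j => .inl j
    | .xa j => .inr j
  left_inv := by rintro (j | j) <;> rfl
  right_inv := by rintro (j | j) <;> rfl

lemma sum_quaternion [NeZero n] (f : QuaternionGroup n → ℝ) :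
    ∑ u, f u = (∑ i : ZMod (2*n), f (a i)) + ∑ i : ZMod (2*n), f (xa i) := by
  rw [← Equiv.sum_comp (qeq n) f, Fintype.sum_sum_type]
  rfl

def vx (n : ℕ) (s t : ℝ) : QuaternionGroup n → ℝ
  | .a _ => s
  | .xa _ => t

lemma norm_vx [NeZero n] (s t : ℝ) :
    vx n s t ⬝ᵥ vx n s t = (2*n : ℝ) * (s*s + t*t) := by
  rw [dotProduct, sum_quaternion]
  simp only [vx, Finset.sum_const, Finset.card_univ, ZMod.card, nsmul_eq_mul]
  push_cast
  ring

lemma quad_form [NeZero n] (s t : ℝ) :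
    vx n s t ⬝ᵥ ((powerGraph (QuaternionGroup n)).adjMatrix ℝ *ᵥ vx n s t) =
      (∑ v : ZMod (2*n), ((addPowerGraph (ZMod (2*n))).degree v : ℝ)) * (s*s)
        + (2*n : ℝ) * (4*(s*t)) + (2*n : ℝ) * (t*t) := by
  have h0n : (0 : ZMod (2*n)) ≠ (n : ZMod (2*n)) := fun h => n_ne_zero' (n := n) h.symm
  have hcard : (Finset.univ : Finset (ZMod (2*n))).card = 2*n := by
    rw [Finset.card_univ, ZMod.card]
  rw [SimpleGraph.dotProduct_mulVec_adjMatrix, sum_quaternion]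
  have houter1 : ∀ i : ZMod (2*n),
      (∑ u : QuaternionGroup n,
        if (powerGraph (QuaternionGroup n)).Adj (a i) u then vx n s t (a i) * vx n s t u else 0)
      = ((addPowerGraph (ZMod (2*n))).degree i : ℝ) * (s*s)
        + (if i = 0 ∨ i = (n : ZMod (2*n)) then (2*n : ℝ) * (s*t) else 0) := by
    intro i
    rw [sum_quaternion]
    congr 1
    · -- a-a part
      simp only [vx]
      simp_rw [adj_a_a]
      rw [SimpleGraph.degree, SimpleGraph.neighborFinset_eq_filter, ← Finset.sum_filter,
        Finset.sum_const, nsmul_eq_mul]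
    · -- a-xa part
      simp only [vx]
      simp_rw [adj_a_xa]
      by_cases h : i = 0 ∨ i = (n : ZMod (2*n))
      · simp only [h, if_true, Finset.sum_const, hcard, nsmul_eq_mul]
        push_cast; ring
      · simp [h]
  have houter2 : ∀ i : ZMod (2*n),
      (∑ u : QuaternionGroup n,
        if (powerGraph (QuaternionGroup n)).Adj (xa i) u then vx n s t (xa i) * vx n s t u else 0)
      = 2*(t*s) + t*t := by
    intro i
    rw [sum_quaternion]
    congr 1
    · -- xa-a part
      simp only [vx]
      have hcomm : ∀ j, (powerGraph (QuaternionGroup n)).Adj (xa i) (a j) ↔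
          (j = 0 ∨ j = (n : ZMod (2*n))) := by
        intro j
        rw [SimpleGraph.adj_comm, adj_a_xa]
      simp_rw [hcomm]
      have hsplit : ∀ j : ZMod (2*n),
          (if j = 0 ∨ j = (n : ZMod (2*n)) then t*s else 0)
          = (if j = 0 then t*s else 0) + (if j = (n : ZMod (2*n)) then t*s else 0) := by
        intro j
        by_cases h1 : j = 0
        · subst h1; simp [h0n]
        · by_cases h2 : j = (n : ZMod (2*n))
          · subst h2; simp [h1]
          · simp [h1, h2]
      simp_rw [hsplit]
      rw [Finset.sum_add_distrib, Finset.sum_ite_eq' Finset.univ (0 : ZMod (2*n)) (fun _ => t*s),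
        Finset.sum_ite_eq' Finset.univ ((n : ZMod (2*n))) (fun _ => t*s)]
      simp
      ring
    · -- xa-xa part
      simp only [vx]
      simp_rw [adj_xa_xa]
      rw [Finset.sum_ite_eq' Finset.univ (i + (n : ZMod (2*n))) (fun _ => t*t)]
      simp
  simp_rw [houter1, houter2]
  rw [Finset.sum_add_distrib]
  have hsplit2 : ∀ i : ZMod (2*n),
      (if i = 0 ∨ i = (n : ZMod (2*n)) then (2*n : ℝ) * (s*t) else 0)
      = (if i = 0 then (2*n : ℝ)*(s*t) else 0) + (if i = (n : ZMod (2*n)) then (2*n : ℝ)*(s*t) else 0) := by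
    intro i
    by_cases h1 : i = 0
    · subst h1; simp [h0n]
    · by_cases h2 : i = (n : ZMod (2*n))
      · subst h2; simp [h1]
      · simp [h1, h2]
  simp_rw [hsplit2]
  rw [Finset.sum_add_distrib, Finset.sum_ite_eq' Finset.univ (0 : ZMod (2*n)),
    Finset.sum_ite_eq' Finset.univ ((n : ZMod (2*n))), ← Finset.sum_mul,
    Finset.sum_const, hcard]
  simp only [Finset.mem_univ, if_true, nsmul_eq_mul]
  push_cast
  ring

lemma rayleigh_bound {V : Type*} [Fintype V] [DecidableEq V]
    (A : Matrix V V ℝ) (hA : A.IsHermitian) (lam : ℝ)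
    (hl : ∀ i, hA.eigenvalues i ≤ lam) (x : V → ℝ) :
    x ⬝ᵥ (A *ᵥ x) ≤ lam * (x ⬝ᵥ x) := by
  classical
  have hT : Aᵀ = A := by
    ext i j
    conv_rhs => rw [← hA]
    simp [Matrix.conjTranspose_apply]
  have hswap : ∀ u w : V → ℝ, u ⬝ᵥ (A *ᵥ w) = (A *ᵥ u) ⬝ᵥ w := by
    intro u w
    rw [dotProduct_mulVec, ← Matrix.mulVec_transpose, hT]
  set b := hA.eigenvectorBasis with hb
  set X : EuclideanSpace ℝ V := (WithLp.equiv 2 _).symm x with hX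
  have hiprod : ∀ u v : EuclideanSpace ℝ V,
      (inner ℝ u v : ℝ) = (⇑u : V → ℝ) ⬝ᵥ ⇑v := by
    intro u v
    simp [PiLp.inner_apply, dotProduct, RCLike.inner_apply, conj_trivial, mul_comm]
  have key : (inner ℝ X X : ℝ) = x ⬝ᵥ x := hiprod X X
  have expand := b.sum_inner_mul_inner X ((WithLp.equiv 2 _).symm (A *ᵥ x))
  have expand2 := b.sum_inner_mul_inner X X
  have hterm : ∀ j, (inner ℝ (b j) ((WithLp.equiv 2 _).symm (A *ᵥ x)) : ℝ)
      = hA.eigenvalues j * (inner ℝ (b j) X : ℝ) := by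
    intro j
    rw [hiprod, hiprod]
    show (⇑(b j) : V → ℝ) ⬝ᵥ (A *ᵥ x) = hA.eigenvalues j * ((⇑(b j) : V → ℝ) ⬝ᵥ x)
    rw [hswap, hb, Matrix.IsHermitian.mulVec_eigenvectorBasis, smul_dotProduct,
      smul_eq_mul]
  calc x ⬝ᵥ (A *ᵥ x) = (inner ℝ X ((WithLp.equiv 2 _).symm (A *ᵥ x)) : ℝ) := (hiprod X ((WithLp.equiv 2 _).symm (A *ᵥ x))).symm
    _ = ∑ j, (inner ℝ X (b j) : ℝ) * inner ℝ (b j) ((WithLp.equiv 2 _).symm (A *ᵥ x)) := expand.symm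
    _ = ∑ j, hA.eigenvalues j * ((inner ℝ X (b j) : ℝ) * inner ℝ (b j) X) := by
        simp_rw [hterm]
        exact Finset.sum_congr rfl fun j _ => by ring
    _ ≤ ∑ j, lam * ((inner ℝ X (b j) : ℝ) * inner ℝ (b j) X) := by
        apply Finset.sum_le_sum
        intro j _
        have hnn : (0:ℝ) ≤ (inner ℝ X (b j) : ℝ) * inner ℝ (b j) X := by
          rw [real_inner_comm (b j) X]; exact mul_self_nonneg _
        exact mul_le_mul_of_nonneg_right (hl j) hnn
    _ = lam * ∑ j, (inner ℝ X (b j) : ℝ) * inner ℝ (b j) X := by rw [Finset.mul_sum]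
    _ = lam * (x ⬝ᵥ x) := by rw [expand2, key]
/-- Spectral-radius lower bound for the power graph of the dicyclic group of order `4n`,
in terms of the average degree of the power graph of `ZMod (2n)`. -/
theorem spectralRadius_powerGraph_dicyclic_lower_bound
    (n : ℕ) [NeZero n] (hn : 2 ≤ n) (lam Davg : ℝ)
    (hlam : IsGreatest (spectrum ℝ ((powerGraph (QuaternionGroup n)).adjMatrix ℝ)) lam)
    (hDavg : Davg =
      (∑ v : ZMod (2 * n), ((addPowerGraph (ZMod (2 * n))).degree v : ℝ)) / (2 * (n : ℝ))) :
    ((Davg + 1) + Real.sqrt ((Davg - 1) ^ 2 + 16)) / 2 ≤ lam := by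

  have hA : ((powerGraph (QuaternionGroup n)).adjMatrix ℝ).IsHermitian := by
    ext i j
    simp only [Matrix.conjTranspose_apply, star_trivial, SimpleGraph.adjMatrix_apply]
    rw [SimpleGraph.adj_comm]
  have hl : ∀ i, hA.eigenvalues i ≤ lam :=
    fun i => hlam.2 (hA.eigenvalues_mem_spectrum_real i)
  have hn0 : (0:ℝ) < (n:ℝ) := by exact_mod_cast NeZero.pos n
  have h2n : (2*(n:ℝ)) ≠ 0 := by positivity
  set r := Real.sqrt ((Davg - 1) ^ 2 + 16) with hrdef
  have hr : r^2 = (Davg-1)^2+16 := Real.sq_sqrt (by positivity)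
  set L := ((Davg + 1) + r) / 2 with hLdef
  have hLquad : L^2 = (Davg+1)*L - Davg + 4 := by
    rw [hLdef]; linear_combination hr/4
  set u := L - Davg with hu
  have hsum : (2*(n:ℝ)) * Davg
      = ∑ v : ZMod (2 * n), ((addPowerGraph (ZMod (2 * n))).degree v : ℝ) := by
    rw [hDavg]; field_simp
  have hray := rayleigh_bound _ hA lam hl (vx n 2 u)
  rw [quad_form, norm_vx, ← hsum] at hray
  have hkey : Davg*(2*2) + 4*(2*u) + u*u = L*(2*2+u*u) := by
    rw [hu]; linear_combination (-(L - Davg)) * hLquad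
  have hpos : (0:ℝ) < (2*(n:ℝ))*(2*2+u*u) := by
    apply mul_pos (by positivity)
    nlinarith [mul_self_nonneg u]
  have hineq : L * ((2*(n:ℝ))*(2*2+u*u)) ≤ lam * ((2*(n:ℝ))*(2*2+u*u)) := by
    calc L * ((2*(n:ℝ))*(2*2+u*u)) = (2*(n:ℝ))*(L*(2*2+u*u)) := by ring
      _ = (2*(n:ℝ))*Davg*(2*2) + (2*(n:ℝ))*(4*(2*u)) + (2*(n:ℝ))*(u*u) := by
          rw [← hkey]; ring
      _ ≤ lam * ((2*(n:ℝ))*(2*2+u*u)) := by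
          calc (2*(n:ℝ))*Davg*(2*2) + (2*(n:ℝ))*(4*(2*u)) + (2*(n:ℝ))*(u*u)
              = (2*(n:ℝ))*Davg*(2*2) + (2*(n:ℝ))*(4*(2*u)) + (2*(n:ℝ))*(u*u) := rfl
            _ ≤ lam * ((2*(n:ℝ))*(2*2+u*u)) := by
                have : (2*(n:ℝ))*(2*2+u*u) = (2*(n:ℝ))*(2*2+u*u) := rfl
                nlinarith [hray]
  exact le_of_mul_le_mul_right hineq hpos
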